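/- arXiv:2104.02985 — 3 statements merged into one kernel-verified Lean document; each statement's English description precedes it below -/
import Mathlib

section
/- Let C be a coalgebra over ℂ and ψ ∈ C'. For every c ∈ C, the series exp_C(ψ)(c) = Σ_{n=0}^∞ ψ^{*n}(c)/n! converges absolutely in ℂ, where ψ^{*n} denotes the n-fold convolution power of ψ (with ψ^{*0} = δ the counit). -/
open TensorProduct

/-- Convolution of linear functionals on a coalgebra: `f * g = (f ⊗ g) ∘ Δ`. -/
noncomputable def conv {C : Type*} [AddCommGroup C] [Module ℂ C] [Coalgebra ℂ C]
    (f g : C →ₗ[ℂ] ℂ) : C →ₗ[ℂ] ℂ :=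
  (LinearMap.mul' ℂ ℂ).comp ((TensorProduct.map f g).comp Coalgebra.comul)

/-- Convolution powers, with `ψ^{*0} = δ` the counit. -/
noncomputable def convPow {C : Type*} [AddCommGroup C] [Module ℂ C] [Coalgebra ℂ C]
    (ψ : C →ₗ[ℂ] ℂ) : ℕ → (C →ₗ[ℂ] ℂ)
  | 0 => Coalgebra.counit
  | n + 1 => conv ψ (convPow ψ n)

/-- Apply a functional to the left leg of a tensor. -/
noncomputable def applyLeft {C M : Type*} [AddCommGroup C] [Module ℂ C]
    [AddCommGroup M] [Module ℂ M] (f : C →ₗ[ℂ] ℂ) : C ⊗[ℂ] M →ₗ[ℂ] M :=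
  (TensorProduct.lid ℂ M).toLinearMap ∘ₗ f.rTensor M

@[simp] lemma applyLeft_tmul {C M : Type*} [AddCommGroup C] [Module ℂ C]
    [AddCommGroup M] [Module ℂ M] (f : C →ₗ[ℂ] ℂ) (x : C) (m : M) :
    applyLeft f (x ⊗ₜ[ℂ] m) = f x • m := by
  simp [applyLeft]

lemma applyLeft_assoc {C : Type*} [AddCommGroup C] [Module ℂ C] (f : C →ₗ[ℂ] ℂ) :
    (applyLeft f (M := C ⊗[ℂ] C)) ∘ₗ (TensorProduct.assoc ℂ C C C).toLinearMap
      = (applyLeft f (M := C)).rTensor C :=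
  TensorProduct.ext_threefold fun x y z => by
    simp [smul_tmul']

lemma conv_apply_of_repr {C : Type*} [AddCommGroup C] [Module ℂ C] [Coalgebra ℂ C]
    (f g : C →ₗ[ℂ] ℂ) (x : C) {ι : Type*} (s : Finset ι) (u v : ι → C)
    (h : Coalgebra.comul (R := ℂ) x = ∑ i ∈ s, u i ⊗ₜ[ℂ] v i) :
    conv f g x = ∑ i ∈ s, f (u i) * g (v i) := by
  simp [conv, h, LinearMap.mul'_apply]

/-- For every `c`, the exponential series `Σ ψ^{*n}(c)/n!` converges absolutely in `ℂ`. -/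
theorem conv_exp_summable {C : Type*} [AddCommGroup C] [Module ℂ C] [Coalgebra ℂ C]
    (ψ : C →ₗ[ℂ] ℂ) (c : C) :
    Summable (fun n : ℕ => ‖convPow ψ n c‖ / (n.factorial : ℝ)) := by
  classical
  obtain ⟨S, hS⟩ := TensorProduct.exists_finset (R := ℂ) (Coalgebra.comul (R := ℂ) c)
  set A : Submodule ℂ C := Submodule.span ℂ ((S.image Prod.fst : Finset C) : Set C) with hAdef
  have hfd : FiniteDimensional ℂ A :=
    FiniteDimensional.span_of_finite ℂ (Finset.finite_toSet _)
  set B : Module.Basis (Fin (Module.finrank ℂ A)) ℂ A := Module.finBasis ℂ A with hB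
  obtain ⟨A', hA'⟩ := Submodule.exists_isCompl A
  set π : C →ₗ[ℂ] A := A.projectionOnto A' hA' with hπ
  set f : Fin (Module.finrank ℂ A) → (C →ₗ[ℂ] ℂ) := fun i => B.coord i ∘ₗ π with hf
  have hfval : ∀ (i) (x : C) (hx : x ∈ A), f i x = B.repr ⟨x, hx⟩ i := by
    intro i x hx
    have : π x = ⟨x, hx⟩ := Submodule.projectionOnto_apply_left hA' ⟨x, hx⟩
    simp [hf, this, Module.Basis.coord_apply]
  set a : Fin (Module.finrank ℂ A) → C := fun i => (B i : C) with ha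
  have hfa : ∀ i l, f l (a i) = if i = l then 1 else 0 := by
    intro i l
    have hmem : a i ∈ A := (B i).2
    rw [hfval l (a i) hmem]
    have : (⟨a i, hmem⟩ : A) = B i := rfl
    rw [this, Module.Basis.repr_self, Finsupp.single_apply]
  set w : Fin (Module.finrank ℂ A) → C :=
    fun i => applyLeft (f i) (Coalgebra.comul (R := ℂ) c) with hw
  -- each p.1 for p ∈ S lies in A
  have hmemA : ∀ p ∈ S, (p : C × C).1 ∈ A := fun p hp =>
    Submodule.subset_span (Finset.mem_coe.2 (Finset.mem_image_of_mem Prod.fst hp))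
  have hS' : Coalgebra.comul (R := ℂ) c = ∑ p ∈ S.attach, p.1.1 ⊗ₜ[ℂ] p.1.2 := by
    rw [hS, ← Finset.sum_attach S (fun p => p.1 ⊗ₜ[ℂ] p.2)]
  -- (a) comul c = ∑ i, a i ⊗ w i
  have hrep : Coalgebra.comul (R := ℂ) c = ∑ i, a i ⊗ₜ[ℂ] w i := by
    have hw' : ∀ i, w i = ∑ p ∈ S.attach, (B.repr ⟨p.1.1, hmemA p.1 p.2⟩ i) • p.1.2 := by
      intro i
      show applyLeft (f i) (Coalgebra.comul (R := ℂ) c) = _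
      rw [hS', map_sum]
      exact Finset.sum_congr rfl fun p _ => by
        rw [applyLeft_tmul, hfval i p.1.1 (hmemA p.1 p.2)]
    calc Coalgebra.comul (R := ℂ) c
        = ∑ p ∈ S.attach, (p.1.1) ⊗ₜ[ℂ] (p.1.2) := hS'
      _ = ∑ p ∈ S.attach, ∑ i, (B.repr ⟨p.1.1, hmemA p.1 p.2⟩ i) • (a i ⊗ₜ[ℂ] p.1.2) := by
          refine Finset.sum_congr rfl fun p _ => ?_
          have hx : (p.1.1 : C) = ∑ i, (B.repr ⟨p.1.1, hmemA p.1 p.2⟩ i) • a i := by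
            have h2 := congrArg (Submodule.subtype A) (B.sum_repr ⟨p.1.1, hmemA p.1 p.2⟩)
            simpa only [ha, map_sum, map_smul, Submodule.subtype_apply] using h2.symm
          calc (p.1.1 : C) ⊗ₜ[ℂ] p.1.2
              = (∑ i, (B.repr ⟨p.1.1, hmemA p.1 p.2⟩ i) • a i) ⊗ₜ[ℂ] p.1.2 := by rw [← hx]
            _ = ∑ i, (B.repr ⟨p.1.1, hmemA p.1 p.2⟩ i) • (a i ⊗ₜ[ℂ] p.1.2) := by
                rw [TensorProduct.sum_tmul]
                exact Finset.sum_congr rfl fun i _ => (TensorProduct.smul_tmul' _ _ _).symm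
      _ = ∑ i, ∑ p ∈ S.attach, (B.repr ⟨p.1.1, hmemA p.1 p.2⟩ i) • (a i ⊗ₜ[ℂ] p.1.2) :=
          Finset.sum_comm
      _ = ∑ i, a i ⊗ₜ[ℂ] w i := by
          refine Finset.sum_congr rfl fun i _ => ?_
          rw [hw' i, TensorProduct.tmul_sum]
          exact Finset.sum_congr rfl fun p _ => by rw [TensorProduct.tmul_smul]
  set r : Fin (Module.finrank ℂ A) → Fin (Module.finrank ℂ A) → C :=
    fun k i => applyLeft (f k) (Coalgebra.comul (R := ℂ) (a i)) with hr
  -- (b) comul (w k) = ∑ i, r k i ⊗ w i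
  have hcomulw : ∀ k, Coalgebra.comul (R := ℂ) (w k) = ∑ i, r k i ⊗ₜ[ℂ] w i := by
    intro k
    have hco := Coalgebra.coassoc_apply (R := ℂ) c
    have h1 := congrArg (applyLeft (f k) (M := C ⊗[ℂ] C)) hco
    -- RHS of h1
    have hre : applyLeft (f k) ((Coalgebra.comul (R := ℂ)).lTensor C
        (Coalgebra.comul (R := ℂ) c)) = Coalgebra.comul (R := ℂ) (w k) := by
      rw [hrep, map_sum, map_sum]
      have : ∀ i, applyLeft (f k) ((Coalgebra.comul (R := ℂ)).lTensor C (a i ⊗ₜ[ℂ] w i))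
          = (if i = k then (1:ℂ) else 0) • Coalgebra.comul (R := ℂ) (w i) := by
        intro i
        rw [LinearMap.lTensor_tmul, applyLeft_tmul, hfa]
      simp only [this, ite_smul, one_smul, zero_smul]
      simp
    -- LHS of h1
    have hle : applyLeft (f k) ((TensorProduct.assoc ℂ C C C)
        ((Coalgebra.comul (R := ℂ)).rTensor C (Coalgebra.comul (R := ℂ) c)))
        = ∑ i, r k i ⊗ₜ[ℂ] w i := by
      rw [hrep, map_sum, map_sum, map_sum]
      have key : ∀ t : (C ⊗[ℂ] C) ⊗[ℂ] C,
          applyLeft (f k) ((TensorProduct.assoc ℂ C C C) t)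
            = (applyLeft (f k) (M := C)).rTensor C t := fun t =>
        LinearMap.congr_fun (applyLeft_assoc (f k)) t
      refine Fintype.sum_congr _ _ fun i => ?_
      rw [LinearMap.rTensor_tmul, key, LinearMap.rTensor_tmul]
    rw [hre, hle] at h1
    exact h1.symm
  -- (c) c = ∑ i, counit (a i) • w i
  have hcrep : c = ∑ i, (Coalgebra.counit (R := ℂ) (a i)) • w i := by
    have h0 : applyLeft (Coalgebra.counit (R := ℂ)) (Coalgebra.comul (R := ℂ) c) = c := by
      rw [applyLeft, LinearMap.comp_apply, Coalgebra.rTensor_counit_comul]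
      simp
    rw [← h0, hrep, map_sum]
    exact Finset.sum_congr rfl fun i _ => by rw [applyLeft_tmul]
  -- the recursion for convPow on the w's
  have hrec : ∀ n k, convPow ψ (n + 1) (w k) = ∑ i, ψ (r k i) * convPow ψ n (w i) := by
    intro n k
    show conv ψ (convPow ψ n) (w k) = _
    exact conv_apply_of_repr ψ (convPow ψ n) (w k) Finset.univ (r k) w (hcomulw k)
  -- exponential bound
  set M : ℕ → ℝ := fun n => ∑ i, ‖convPow ψ n (w i)‖ with hM
  set Q : ℝ := ∑ k, ∑ i, ‖ψ (r k i)‖ with hQ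
  have hQ0 : 0 ≤ Q := Finset.sum_nonneg fun _ _ => Finset.sum_nonneg fun _ _ => norm_nonneg _
  have hM0 : ∀ n, 0 ≤ M n := fun n => Finset.sum_nonneg fun _ _ => norm_nonneg _
  have hMle : ∀ (n) (i : Fin (Module.finrank ℂ A)), ‖convPow ψ n (w i)‖ ≤ M n := fun n i =>
    Finset.single_le_sum (f := fun i => ‖convPow ψ n (w i)‖)
      (fun _ _ => norm_nonneg _) (Finset.mem_univ i)
  have hstep : ∀ n, M (n + 1) ≤ Q * M n := by
    intro n
    rw [hM, hQ, Finset.sum_mul]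
    refine Finset.sum_le_sum fun k _ => ?_
    rw [hrec n k, Finset.sum_mul]
    refine (norm_sum_le _ _).trans (Finset.sum_le_sum fun i _ => ?_)
    rw [norm_mul]
    exact mul_le_mul_of_nonneg_left (hMle n i) (norm_nonneg _)
  have hMbound : ∀ n, M n ≤ M 0 * Q ^ n := by
    intro n
    induction n with
    | zero => simp
    | succ n ih =>
      calc M (n + 1) ≤ Q * M n := hstep n
        _ ≤ Q * (M 0 * Q ^ n) := mul_le_mul_of_nonneg_left ih hQ0
        _ = M 0 * Q ^ (n + 1) := by ring
  set T : ℝ := ∑ i, ‖Coalgebra.counit (R := ℂ) (a i)‖ with hT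
  have hT0 : 0 ≤ T := Finset.sum_nonneg fun _ _ => norm_nonneg _
  have hcbound : ∀ n, ‖convPow ψ n c‖ ≤ T * M 0 * Q ^ n := by
    intro n
    have h1 : convPow ψ n c = ∑ i, (Coalgebra.counit (R := ℂ) (a i)) • convPow ψ n (w i) := by
      conv_lhs => rw [hcrep]
      rw [map_sum]
      exact Finset.sum_congr rfl fun i _ => by rw [map_smul]
    calc ‖convPow ψ n c‖
        ≤ ∑ i, ‖Coalgebra.counit (R := ℂ) (a i)‖ * ‖convPow ψ n (w i)‖ := by
          rw [h1]
          refine (norm_sum_le _ _).trans (Finset.sum_le_sum fun i _ => ?_)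
          rw [norm_smul]
      _ ≤ ∑ i, ‖Coalgebra.counit (R := ℂ) (a i)‖ * M n :=
          Finset.sum_le_sum fun i _ => mul_le_mul_of_nonneg_left (hMle n i) (norm_nonneg _)
      _ = T * M n := by rw [hT, Finset.sum_mul]
      _ ≤ T * (M 0 * Q ^ n) := mul_le_mul_of_nonneg_left (hMbound n) hT0
      _ = T * M 0 * Q ^ n := by ring
  -- compare with exponential series
  refine Summable.of_nonneg_of_le (fun n => by positivity) (fun n => ?_)
    (((Real.summable_pow_div_factorial Q).mul_left (T * M 0)))
  have hfac : (0:ℝ) < (n.factorial : ℝ) := by positivity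
  calc ‖convPow ψ n c‖ / (n.factorial : ℝ)
      ≤ (T * M 0 * Q ^ n) / (n.factorial : ℝ) := by gcongr; exact hcbound n
    _ = T * M 0 * (Q ^ n / (n.factorial : ℝ)) := by ring
end

section
/- In a unital Banach algebra A, if x ∈ A and r_n ∈ A satisfy ‖r_n‖ ≤ K/n² for all n and some constant K, then (1 + x/n + r_n)^n → exp(x) in norm as n → ∞. -/
open Filter

open NormedSpace in
private lemma aux_norm_exp_le {A : Type*} [NormedRing A] [NormedAlgebra ℂ A]
    [CompleteSpace A] (y : A) {B : ℝ} (hB : 1 ≤ B) (h1 : ‖(1 : A)‖ ≤ B) :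
    ‖exp y‖ ≤ B * Real.exp ‖y‖ := by
  simp only [exp_eq_tsum ℂ]
  refine (norm_tsum_le_tsum_norm (norm_expSeries_summable' (𝕂 := ℂ) y)).trans ?_
  have hbd : ∀ k : ℕ, ‖((k.factorial : ℂ))⁻¹ • y ^ k‖ ≤ B * (‖y‖ ^ k / k.factorial) := by
    intro k
    rw [norm_smul, norm_inv, Complex.norm_natCast]
    rcases Nat.eq_zero_or_pos k with hk | hk
    · subst hk; simpa using h1
    · have h2 : ‖y ^ k‖ ≤ ‖y‖ ^ k := norm_pow_le' y hk
      have h3 : (0:ℝ) < (k.factorial : ℝ) := by exact_mod_cast k.factorial_pos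
      calc ((k.factorial : ℝ))⁻¹ * ‖y ^ k‖ ≤ ((k.factorial : ℝ))⁻¹ * ‖y‖ ^ k :=
            mul_le_mul_of_nonneg_left h2 (by positivity)
        _ = ‖y‖ ^ k / k.factorial := by rw [div_eq_inv_mul]
        _ ≤ B * (‖y‖ ^ k / k.factorial) := le_mul_of_one_le_left (by positivity) hB
  calc ∑' k : ℕ, ‖((k.factorial : ℂ))⁻¹ • y ^ k‖
      ≤ ∑' k : ℕ, B * (‖y‖ ^ k / k.factorial) :=
        Summable.tsum_le_tsum hbd (norm_expSeries_summable' (𝕂 := ℂ) y)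
          ((Real.summable_pow_div_factorial ‖y‖).mul_left _)
    _ = B * Real.exp ‖y‖ := by
        rw [tsum_mul_left, Real.exp_eq_exp_ℝ, exp_eq_tsum_div]

open NormedSpace in
private lemma aux_exp_sub {A : Type*} [NormedRing A] [NormedAlgebra ℂ A]
    [CompleteSpace A] (y : A) :
    ‖exp y - 1 - y‖ ≤ ‖y‖ ^ 2 * Real.exp ‖y‖ := by
  have hs := norm_expSeries_summable' (𝕂 := ℂ) y
  have hsum := hs.of_norm
  have hdecomp : exp y - 1 - y = ∑' k : ℕ, ((k + 2).factorial : ℂ)⁻¹ • y ^ (k + 2) := by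
    simp only [exp_eq_tsum ℂ]
    rw [← Summable.sum_add_tsum_nat_add 2 hsum]
    simp [Finset.sum_range_succ]
    abel
  rw [hdecomp]
  have hs2 : Summable fun k : ℕ => ‖(((k + 2).factorial : ℂ))⁻¹ • y ^ (k + 2)‖ :=
    (summable_nat_add_iff 2).2 hs
  refine (norm_tsum_le_tsum_norm hs2).trans ?_
  have hbound : ∀ k : ℕ, ‖(((k + 2).factorial : ℂ))⁻¹ • y ^ (k + 2)‖ ≤
      ‖y‖ ^ 2 * (‖y‖ ^ k / k.factorial) := by
    intro k
    rw [norm_smul, norm_inv, Complex.norm_natCast]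
    have h1 : ‖y ^ (k + 2)‖ ≤ ‖y‖ ^ (k + 2) := norm_pow_le' y (by omega)
    have h2 : (((k + 2).factorial : ℝ))⁻¹ ≤ ((k.factorial : ℝ))⁻¹ := by
      apply inv_anti₀
      · exact_mod_cast k.factorial_pos
      · exact_mod_cast Nat.factorial_le (by omega)
    have h3 : (0:ℝ) < ((k + 2).factorial : ℝ) := by exact_mod_cast (k+2).factorial_pos
    have h4 : (0:ℝ) < (k.factorial : ℝ) := by exact_mod_cast k.factorial_pos
    calc (((k + 2).factorial : ℝ))⁻¹ * ‖y ^ (k + 2)‖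
        ≤ ((k.factorial : ℝ))⁻¹ * ‖y‖ ^ (k + 2) :=
          mul_le_mul h2 h1 (norm_nonneg _) (by positivity)
      _ = ‖y‖ ^ 2 * (‖y‖ ^ k / k.factorial) := by
          rw [pow_add]; field_simp
  calc ∑' k : ℕ, ‖(((k + 2).factorial : ℂ))⁻¹ • y ^ (k + 2)‖
      ≤ ∑' k : ℕ, ‖y‖ ^ 2 * (‖y‖ ^ k / k.factorial) :=
        Summable.tsum_le_tsum hbound hs2 ((Real.summable_pow_div_factorial ‖y‖).mul_left _)
    _ = ‖y‖ ^ 2 * Real.exp ‖y‖ := by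
        rw [tsum_mul_left, Real.exp_eq_exp_ℝ, exp_eq_tsum_div]

private lemma aux_pow_bound {A : Type*} [NormedRing A] (b : A) {M B : ℝ}
    (hB : 1 ≤ B) (h1 : ‖(1 : A)‖ ≤ B) (hM : 1 ≤ M) (hb : ‖b‖ ≤ M) :
    ∀ n : ℕ, ‖b ^ n‖ ≤ B * M ^ n := by
  intro n
  rcases Nat.eq_zero_or_pos n with hn | hn
  · subst hn; simpa using h1
  · calc ‖b ^ n‖ ≤ ‖b‖ ^ n := norm_pow_le' b hn
      _ ≤ M ^ n := pow_le_pow_left₀ (norm_nonneg _) hb n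
      _ ≤ B * M ^ n := le_mul_of_one_le_left (by positivity) hB

private lemma aux_pow_sub_pow {A : Type*} [NormedRing A] (a b : A) {M B : ℝ}
    (hB : 1 ≤ B) (h1 : ‖(1 : A)‖ ≤ B) (hM : 1 ≤ M) (ha : ‖a‖ ≤ M) (hb : ‖b‖ ≤ M) :
    ∀ n : ℕ, ‖a ^ n - b ^ n‖ ≤ n * B * M ^ n * ‖a - b‖ := by
  intro n
  induction n with
  | zero => simp
  | succ n ih =>
    have hM0 : (0:ℝ) ≤ M := le_trans zero_le_one hM
    have hB0 : (0:ℝ) ≤ B := le_trans zero_le_one hB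
    have hN0 : (0:ℝ) ≤ M ^ n := by positivity
    have hd : (0:ℝ) ≤ ‖a - b‖ := norm_nonneg _
    have key : a ^ (n + 1) - b ^ (n + 1) = a * (a ^ n - b ^ n) + (a - b) * b ^ n := by
      rw [pow_succ', pow_succ']; noncomm_ring
    have h2 : ‖a * (a ^ n - b ^ n)‖ ≤ M * (n * B * M ^ n * ‖a - b‖) :=
      (norm_mul_le _ _).trans (mul_le_mul ha ih (norm_nonneg _) hM0)
    have h3 : ‖(a - b) * b ^ n‖ ≤ ‖a - b‖ * (B * M ^ n) :=
      (norm_mul_le _ _).trans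
        (mul_le_mul_of_nonneg_left (aux_pow_bound b hB h1 hM hb n) hd)
    have h4 : ‖a ^ (n + 1) - b ^ (n + 1)‖ ≤ ‖a * (a ^ n - b ^ n)‖ + ‖(a - b) * b ^ n‖ := by
      rw [key]; exact norm_add_le _ _
    have h5 : (0:ℝ) ≤ (M - 1) * (B * M ^ n * ‖a - b‖) :=
      mul_nonneg (by linarith) (by positivity)
    have hpow : M ^ (n + 1) = M * M ^ n := pow_succ' M n
    push_cast
    rw [hpow]
    nlinarith [h2, h3, h4, h5]

/-- The Lie–Trotter type limit, under the extra assumption `‖1‖ ≤ 1`. -/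
private theorem lie_trotter_aux {A : Type*} [NormedRing A] [NormedAlgebra ℂ A]
    [CompleteSpace A] (honeA : ‖(1 : A)‖ ≤ 1) (x : A) (r : ℕ → A) (K : ℝ) (hK : 0 ≤ K)
    (hr : ∀ n : ℕ, ‖r n‖ ≤ K / (n : ℝ) ^ 2) :
    Tendsto (fun n : ℕ => (1 + (n : ℂ)⁻¹ • x + r n) ^ n) atTop
      (nhds (NormedSpace.exp x)) := by
  set D : ℝ := ‖x‖ ^ 2 * Real.exp ‖x‖ + K with hDdef
  have hD0 : 0 ≤ D := by positivity
  set C : ℝ := Real.exp (‖x‖ + K) * D with hCdef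
  rw [tendsto_iff_norm_sub_tendsto_zero]
  apply squeeze_zero' (Eventually.of_forall fun n => norm_nonneg _)
    (g := fun n : ℕ => C / n) _ (tendsto_const_div_atTop_nhds_zero_nat C)
  filter_upwards [eventually_ge_atTop 1] with n hn
  have hn0 : (n:ℝ) ≠ 0 := by positivity
  have hnpos : (0:ℝ) < n := by positivity
  have hn1 : (1:ℝ) ≤ n := by exact_mod_cast hn
  set y : A := (n : ℂ)⁻¹ • x with hy
  have hyn : ‖y‖ = ‖x‖ / n := by
    rw [hy, norm_smul, norm_inv, Complex.norm_natCast, div_eq_inv_mul]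
  have hynle : ‖y‖ ≤ ‖x‖ := by
    rw [hyn]; exact div_le_self (norm_nonneg _) hn1
  have hexpn : (NormedSpace.exp y) ^ n = NormedSpace.exp x := by
    let +nondep : NormedAlgebra ℚ A := .restrictScalars ℚ ℂ A
    rw [← NormedSpace.exp_nsmul]
    congr 1
    rw [hy, ← Nat.cast_smul_eq_nsmul ℂ, smul_smul, mul_inv_cancel₀, one_smul]
    exact_mod_cast hn0
  set a : A := 1 + (n : ℂ)⁻¹ • x + r n with hadef
  set b : A := NormedSpace.exp y with hbdef
  -- bound ‖a - b‖
  have hab : ‖a - b‖ ≤ D / (n:ℝ) ^ 2 := by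
    have h1 : a - b = -(b - 1 - y) + r n := by rw [hadef, hbdef, ← hy]; abel
    have h2 : ‖a - b‖ ≤ ‖b - 1 - y‖ + ‖r n‖ := by
      rw [h1]; exact (norm_add_le _ _).trans (by rw [norm_neg])
    have h3 : ‖b - 1 - y‖ ≤ ‖y‖ ^ 2 * Real.exp ‖y‖ := aux_exp_sub y
    have h4 : ‖y‖ ^ 2 * Real.exp ‖y‖ ≤ ‖x‖ ^ 2 / (n:ℝ) ^ 2 * Real.exp ‖x‖ := by
      have h4' : ‖x‖ / (n:ℝ) ≤ ‖x‖ := by rw [← hyn]; exact hynle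
      rw [hyn, div_pow]
      exact mul_le_mul_of_nonneg_left (Real.exp_le_exp.2 h4') (by positivity)
    have h5 := hr n
    have h6 : ‖x‖ ^ 2 / (n:ℝ) ^ 2 * Real.exp ‖x‖ + K / (n:ℝ) ^ 2
        = D / (n:ℝ) ^ 2 := by rw [hDdef]; field_simp
    linarith
  -- bound norms of a and b by M
  set M : ℝ := Real.exp ((‖x‖ + K) / n) with hMdef
  have hM1 : 1 ≤ M := Real.one_le_exp (by positivity)
  have hKn : K / (n:ℝ) ^ 2 ≤ K / n := by
    apply div_le_div_of_nonneg_left hK hnpos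
    nlinarith
  have haM : ‖a‖ ≤ M := by
    have h1 : ‖a‖ ≤ ‖(1:A)‖ + ‖y‖ + ‖r n‖ := by
      rw [hadef, ← hy]
      exact (norm_add_le _ _).trans (by gcongr; exact norm_add_le _ _)
    have h2 : ‖a‖ ≤ 1 + (‖x‖ + K) / n := by
      have := hr n
      have h7 : ‖x‖ / n + K / n = (‖x‖ + K) / n := by field_simp
      rw [hyn] at h1
      linarith
    calc ‖a‖ ≤ 1 + (‖x‖ + K) / n := h2
      _ ≤ M := by rw [hMdef]; linarith [Real.add_one_le_exp ((‖x‖ + K) / n)]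
  have hbM : ‖b‖ ≤ M := by
    calc ‖b‖ ≤ 1 * Real.exp ‖y‖ := aux_norm_exp_le y le_rfl honeA
      _ = Real.exp ‖y‖ := one_mul _
      _ ≤ M := by
          rw [hMdef]
          apply Real.exp_le_exp.2
          rw [hyn]
          gcongr
          linarith
  have hMn : M ^ n = Real.exp (‖x‖ + K) := by
    rw [hMdef, ← Real.exp_nat_mul, mul_div_cancel₀ _ hn0]
  -- final estimate
  have hfinal := aux_pow_sub_pow a b le_rfl honeA hM1 haM hbM n
  rw [hexpn] at hfinal
  calc ‖a ^ n - NormedSpace.exp x‖ ≤ n * 1 * M ^ n * ‖a - b‖ := hfinal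
    _ ≤ n * 1 * M ^ n * (D / (n:ℝ) ^ 2) := by
        apply mul_le_mul_of_nonneg_left hab
        positivity
    _ = C / n := by
        rw [hMn, hCdef]
        field_simp

/-- In a unital Banach algebra, if `‖r_n‖ ≤ K/n²`, then
`(1 + x/n + r_n)^n → exp(x)`. -/
theorem lie_trotter_banach {A : Type*} [NormedRing A] [NormedAlgebra ℂ A]
    [CompleteSpace A] (x : A) (r : ℕ → A) (K : ℝ)
    (hr : ∀ n : ℕ, ‖r n‖ ≤ K / (n : ℝ) ^ 2) :
    Tendsto (fun n : ℕ => (1 + (n : ℂ)⁻¹ • x + r n) ^ n) atTop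
      (nhds (NormedSpace.exp x)) := by
  have hK : 0 ≤ K := by
    have h1 := hr 1
    have h2 := norm_nonneg (r 1)
    simp at h1
    linarith
  -- transfer to the left regular representation, where `‖1‖ ≤ 1`
  let ψ : A →+* (A →L[ℂ] A) :=
    { toFun := fun a => ContinuousLinearMap.mul ℂ A a
      map_one' := by ext c; simp [ContinuousLinearMap.mul_apply']
      map_mul' := fun a b => by ext c; simp [ContinuousLinearMap.mul_apply', ContinuousLinearMap.mul_apply, mul_assoc]
      map_zero' := by ext c; simp [ContinuousLinearMap.mul_apply']
      map_add' := fun a b => by ext c; simp [ContinuousLinearMap.mul_apply', ContinuousLinearMap.add_apply, add_mul] }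
  have hψ_cont : Continuous ψ := (ContinuousLinearMap.mul ℂ A).continuous
  have hψ_norm : ∀ a : A, ‖ψ a‖ ≤ ‖a‖ := fun a =>
    ContinuousLinearMap.opNorm_mul_apply_le ℂ A a
  have hψ_smul : ∀ (c : ℂ) (a : A), ψ (c • a) = c • ψ a := fun c a =>
    (ContinuousLinearMap.mul ℂ A).map_smul c a
  have honeE : ‖(1 : A →L[ℂ] A)‖ ≤ 1 := by
    have : (1 : A →L[ℂ] A) = ContinuousLinearMap.id ℂ A := rfl
    rw [this]
    exact ContinuousLinearMap.norm_id_le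
  have hrE : ∀ n : ℕ, ‖ψ (r n)‖ ≤ K / (n : ℝ) ^ 2 := fun n =>
    (hψ_norm (r n)).trans (hr n)
  have haux := lie_trotter_aux honeE (ψ x) (fun n => ψ (r n)) K hK hrE
  have hexp : NormedSpace.exp (ψ x) = ψ (NormedSpace.exp x) :=
    by
      let +nondep : NormedAlgebra ℚ A := .restrictScalars ℚ ℂ A
      let +nondep : NormedAlgebra ℚ (A →L[ℂ] A) := .restrictScalars ℚ ℂ (A →L[ℂ] A)
      exact (NormedSpace.map_exp ψ hψ_cont x).symm
  rw [hexp] at haux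
  have hψ_pow : ∀ n : ℕ,
      (1 + (n : ℂ)⁻¹ • ψ x + ψ (r n)) ^ n = ψ ((1 + (n : ℂ)⁻¹ • x + r n) ^ n) := by
    intro n
    rw [map_pow]
    congr 1
    rw [map_add, map_add, map_one, hψ_smul]
  rw [tendsto_iff_norm_sub_tendsto_zero] at haux ⊢
  apply squeeze_zero' (Eventually.of_forall fun n => norm_nonneg _)
    (g := fun n : ℕ => ‖(1:A)‖ * ‖(1 + (n : ℂ)⁻¹ • ψ x + ψ (r n)) ^ n - ψ (NormedSpace.exp x)‖)
    ?_ ?_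
  · filter_upwards with n
    have key : (1 + (n : ℂ)⁻¹ • x + r n) ^ n - NormedSpace.exp x
        = (ψ ((1 + (n : ℂ)⁻¹ • x + r n) ^ n) - ψ (NormedSpace.exp x)) 1 := by
      simp [ψ, ContinuousLinearMap.sub_apply, ContinuousLinearMap.mul_apply']
    rw [key, ← hψ_pow]
    calc ‖((1 + (n : ℂ)⁻¹ • ψ x + ψ (r n)) ^ n - ψ (NormedSpace.exp x)) 1‖
        ≤ ‖(1 + (n : ℂ)⁻¹ • ψ x + ψ (r n)) ^ n - ψ (NormedSpace.exp x)‖ * ‖(1:A)‖ :=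
          ContinuousLinearMap.le_opNorm _ _
      _ = ‖(1:A)‖ * ‖(1 + (n : ℂ)⁻¹ • ψ x + ψ (r n)) ^ n - ψ (NormedSpace.exp x)‖ :=
          mul_comm _ _
  · simpa using haux.const_mul ‖(1:A)‖
end

section
/- Let B be a dual semigroup with comultiplication Λ : B → B ⊔ B, and let ⊙ be an associative universal product for linear functionals. Then the convolution φ₁ ⋆ φ₂ := (φ₁ ⊙ φ₂)∘Λ makes the set of linear functionals B → ℂ a monoid with identity element the zero functional 0. -/
/-- A bundled non-unital algebra over `ℂ`. -/
structure AlgC where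
  X : Type
  [ring : NonUnitalRing X]
  [mod : Module ℂ X]
  [sc : SMulCommClass ℂ X X]
  [st : IsScalarTower ℂ X X]

attribute [instance] AlgC.ring AlgC.mod AlgC.sc AlgC.st

/-- Morphisms of non-unital `ℂ`-algebras. -/
abbrev AlgC.Hom (A B : AlgC) := A.X →ₙₐ[ℂ] B.X

/-- Free product (coproduct) data for a pair of non-unital algebras. -/
structure FreeProd (A B : AlgC) where
  P : AlgC
  ι₁ : AlgC.Hom A P
  ι₂ : AlgC.Hom B P
  up : ∀ (C : AlgC) (f : AlgC.Hom A C) (g : AlgC.Hom B C),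
    ∃! h : AlgC.Hom P C, h.comp ι₁ = f ∧ h.comp ι₂ = g

/-- The copairing `f ⊔ g : A ⊔ B → C`. -/
noncomputable def FreeProd.lift {A B : AlgC} (d : FreeProd A B) {C : AlgC}
    (f : AlgC.Hom A C) (g : AlgC.Hom B C) : AlgC.Hom d.P C :=
  (d.up C f g).exists.choose

/-- The functorial map `j₁ ⊔ j₂ : A ⊔ B → A' ⊔ B'`. -/
noncomputable def fpMap (fp : ∀ A B : AlgC, FreeProd A B) {A B A' B' : AlgC}
    (j₁ : AlgC.Hom A A') (j₂ : AlgC.Hom B B') :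
    AlgC.Hom (fp A B).P (fp A' B').P :=
  (fp A B).lift ((fp A' B').ι₁.comp j₁) ((fp A' B').ι₂.comp j₂)

/-- The canonical associator `(A ⊔ B) ⊔ C → A ⊔ (B ⊔ C)`. -/
noncomputable def fpAssoc (fp : ∀ A B : AlgC, FreeProd A B) (A B C : AlgC) :
    AlgC.Hom (fp (fp A B).P C).P (fp A (fp B C).P).P :=
  (fp (fp A B).P C).lift
    ((fp A B).lift ((fp A (fp B C).P).ι₁)
      (((fp A (fp B C).P).ι₂).comp ((fp B C).ι₁)))
    (((fp A (fp B C).P).ι₂).comp ((fp B C).ι₂))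

/-- The zero algebra `{0}`. -/
def zeroAlg : AlgC := ⟨PUnit⟩

theorem FreeProd.lift_spec {A B : AlgC} (d : FreeProd A B) {C : AlgC}
    (f : AlgC.Hom A C) (g : AlgC.Hom B C) :
    (d.lift f g).comp d.ι₁ = f ∧ (d.lift f g).comp d.ι₂ = g :=
  (d.up C f g).exists.choose_spec

theorem FreeProd.lift_unique {A B : AlgC} (d : FreeProd A B) {C : AlgC}
    (f : AlgC.Hom A C) (g : AlgC.Hom B C) (h : AlgC.Hom d.P C)
    (h1 : h.comp d.ι₁ = f) (h2 : h.comp d.ι₂ = g) : h = d.lift f g := by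
  rcases d.up C f g with ⟨h', _, uniq⟩
  rw [uniq h ⟨h1, h2⟩, uniq (d.lift f g) (d.lift_spec f g)]

/-- Convolution on a dual semigroup: for an associative universal product `⊙`
(satisfying universality, associativity and the unit condition) and a dual
semigroup `(B₀, Λ)` (coassociative with counit property), the convolution
`φ₁ ⋆ φ₂ := (φ₁ ⊙ φ₂) ∘ Λ` makes the linear functionals on `B₀` a monoid with
identity the zero functional. -/
theorem dual_semigroup_convolution_monoid (fp : ∀ A B : AlgC, FreeProd A B)
    (UP : ∀ A B : AlgC, (A.X →ₗ[ℂ] ℂ) → (B.X →ₗ[ℂ] ℂ) →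
      ((fp A B).P.X →ₗ[ℂ] ℂ))
    (huniv : ∀ (A B A' B' : AlgC) (j₁ : AlgC.Hom A A') (j₂ : AlgC.Hom B B')
        (φ₁ : A'.X →ₗ[ℂ] ℂ) (φ₂ : B'.X →ₗ[ℂ] ℂ),
      UP A B (φ₁ ∘ₗ (LinearMapClass.linearMap j₁)) (φ₂ ∘ₗ (LinearMapClass.linearMap j₂)) =
        (UP A' B' φ₁ φ₂) ∘ₗ LinearMapClass.linearMap (fpMap fp j₁ j₂))
    (hassoc : ∀ (A B C : AlgC) (φ₁ : A.X →ₗ[ℂ] ℂ) (φ₂ : B.X →ₗ[ℂ] ℂ)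
        (φ₃ : C.X →ₗ[ℂ] ℂ),
      UP (fp A B).P C (UP A B φ₁ φ₂) φ₃ =
        (UP A (fp B C).P φ₁ (UP B C φ₂ φ₃)) ∘ₗ LinearMapClass.linearMap (fpAssoc fp A B C))
    (hunit : ∀ (A : AlgC) (φ : A.X →ₗ[ℂ] ℂ),
      UP A zeroAlg φ 0 =
        φ ∘ₗ LinearMapClass.linearMap ((fp A zeroAlg).lift (NonUnitalAlgHom.id ℂ A.X) 0) ∧
      UP zeroAlg A 0 φ =
        φ ∘ₗ LinearMapClass.linearMap ((fp zeroAlg A).lift 0 (NonUnitalAlgHom.id ℂ A.X)))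
    (B₀ : AlgC) (Λ : AlgC.Hom B₀ (fp B₀ B₀).P)
    (hcoassoc : (fpAssoc fp B₀ B₀ B₀).comp
        ((fpMap fp Λ (NonUnitalAlgHom.id ℂ B₀.X)).comp Λ) =
      (fpMap fp (NonUnitalAlgHom.id ℂ B₀.X) Λ).comp Λ)
    (hcounit :
      ((fp B₀ B₀).lift (NonUnitalAlgHom.id ℂ B₀.X) 0).comp Λ =
        NonUnitalAlgHom.id ℂ B₀.X ∧
      ((fp B₀ B₀).lift 0 (NonUnitalAlgHom.id ℂ B₀.X)).comp Λ =
        NonUnitalAlgHom.id ℂ B₀.X) :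
    (∀ f g h : B₀.X →ₗ[ℂ] ℂ,
      (UP B₀ B₀ ((UP B₀ B₀ f g) ∘ₗ (LinearMapClass.linearMap Λ)) h) ∘ₗ (LinearMapClass.linearMap Λ) =
      (UP B₀ B₀ f ((UP B₀ B₀ g h) ∘ₗ (LinearMapClass.linearMap Λ))) ∘ₗ (LinearMapClass.linearMap Λ)) ∧
    (∀ f : B₀.X →ₗ[ℂ] ℂ,
      (UP B₀ B₀ (0 : B₀.X →ₗ[ℂ] ℂ) f) ∘ₗ (LinearMapClass.linearMap Λ) = f ∧
      (UP B₀ B₀ f (0 : B₀.X →ₗ[ℂ] ℂ)) ∘ₗ (LinearMapClass.linearMap Λ) = f) := by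
  have idlin : ∀ (A : AlgC), (LinearMapClass.linearMap (NonUnitalAlgHom.id ℂ A.X)) = LinearMap.id :=
    fun A => rfl
  have cassoc : ∀ {A B C D : AlgC} (f : AlgC.Hom A B) (g : AlgC.Hom B C)
      (h : AlgC.Hom C D), (h.comp g).comp f = h.comp (g.comp f) := fun _ _ _ => rfl
  have tl : ∀ {A B C : AlgC} (g : AlgC.Hom A B) (h : AlgC.Hom B C),
      (LinearMapClass.linearMap (h.comp g)) = (LinearMapClass.linearMap h) ∘ₗ (LinearMapClass.linearMap g) := fun _ _ => rfl
  constructor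
  · intro f g h
    have h1 := huniv B₀ B₀ (fp B₀ B₀).P B₀ Λ (NonUnitalAlgHom.id ℂ B₀.X)
      (UP B₀ B₀ f g) h
    have h2 := huniv B₀ B₀ B₀ (fp B₀ B₀).P (NonUnitalAlgHom.id ℂ B₀.X) Λ
      f (UP B₀ B₀ g h)
    rw [idlin, LinearMap.comp_id] at h1 h2
    calc (UP B₀ B₀ ((UP B₀ B₀ f g) ∘ₗ (LinearMapClass.linearMap Λ)) h) ∘ₗ (LinearMapClass.linearMap Λ)
        = (UP (fp B₀ B₀).P B₀ (UP B₀ B₀ f g) h) ∘ₗ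
            (LinearMapClass.linearMap ((fpMap fp Λ (NonUnitalAlgHom.id ℂ B₀.X)).comp Λ)) := by
          rw [h1]; simp only [tl, LinearMap.comp_assoc]
      _ = (UP B₀ (fp B₀ B₀).P f (UP B₀ B₀ g h)) ∘ₗ
            (LinearMapClass.linearMap ((fpAssoc fp B₀ B₀ B₀).comp
              ((fpMap fp Λ (NonUnitalAlgHom.id ℂ B₀.X)).comp Λ))) := by
          rw [hassoc]; simp only [tl, LinearMap.comp_assoc]
      _ = (UP B₀ (fp B₀ B₀).P f (UP B₀ B₀ g h)) ∘ₗ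
            (LinearMapClass.linearMap ((fpMap fp (NonUnitalAlgHom.id ℂ B₀.X) Λ).comp Λ)) := by
          rw [hcoassoc]
      _ = (UP B₀ B₀ f ((UP B₀ B₀ g h) ∘ₗ (LinearMapClass.linearMap Λ))) ∘ₗ (LinearMapClass.linearMap Λ) := by
          rw [h2]; simp only [tl, LinearMap.comp_assoc]
  · intro f
    constructor
    · have h2 := huniv B₀ B₀ zeroAlg B₀ (0 : AlgC.Hom B₀ zeroAlg)
        (NonUnitalAlgHom.id ℂ B₀.X) (0 : zeroAlg.X →ₗ[ℂ] ℂ) f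
      rw [idlin, LinearMap.comp_id, LinearMap.zero_comp] at h2
      have key : ((fp zeroAlg B₀).lift 0 (NonUnitalAlgHom.id ℂ B₀.X)).comp
          (fpMap fp (0 : AlgC.Hom B₀ zeroAlg) (NonUnitalAlgHom.id ℂ B₀.X)) =
          (fp B₀ B₀).lift 0 (NonUnitalAlgHom.id ℂ B₀.X) := by
        apply (fp B₀ B₀).lift_unique
        · rw [cassoc]; unfold fpMap
          rw [((fp B₀ B₀).lift_spec _ _).1, ← cassoc,
            ((fp zeroAlg B₀).lift_spec _ _).1]
          ext x; simp
        · rw [cassoc]; unfold fpMap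
          rw [((fp B₀ B₀).lift_spec _ _).2, ← cassoc,
            ((fp zeroAlg B₀).lift_spec _ _).2]
          rfl
      calc (UP B₀ B₀ (0 : B₀.X →ₗ[ℂ] ℂ) f) ∘ₗ (LinearMapClass.linearMap Λ)
          = (UP zeroAlg B₀ 0 f ∘ₗ
              (LinearMapClass.linearMap (fpMap fp (0 : AlgC.Hom B₀ zeroAlg) (NonUnitalAlgHom.id ℂ B₀.X))))
              ∘ₗ (LinearMapClass.linearMap Λ) := by rw [h2]
        _ = f ∘ₗ (LinearMapClass.linearMap ((((fp zeroAlg B₀).lift 0 (NonUnitalAlgHom.id ℂ B₀.X)).comp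
              (fpMap fp (0 : AlgC.Hom B₀ zeroAlg) (NonUnitalAlgHom.id ℂ B₀.X))).comp Λ)) := by
            rw [(hunit B₀ f).2]; simp only [tl, LinearMap.comp_assoc]
        _ = f ∘ₗ (LinearMapClass.linearMap (((fp B₀ B₀).lift 0 (NonUnitalAlgHom.id ℂ B₀.X)).comp Λ)) := by
            rw [key]
        _ = f := by rw [hcounit.2, idlin, LinearMap.comp_id]
    · have h2 := huniv B₀ B₀ B₀ zeroAlg (NonUnitalAlgHom.id ℂ B₀.X)
        (0 : AlgC.Hom B₀ zeroAlg) f (0 : zeroAlg.X →ₗ[ℂ] ℂ)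
      rw [idlin, LinearMap.comp_id, LinearMap.zero_comp] at h2
      have key : ((fp B₀ zeroAlg).lift (NonUnitalAlgHom.id ℂ B₀.X) 0).comp
          (fpMap fp (NonUnitalAlgHom.id ℂ B₀.X) (0 : AlgC.Hom B₀ zeroAlg)) =
          (fp B₀ B₀).lift (NonUnitalAlgHom.id ℂ B₀.X) 0 := by
        apply (fp B₀ B₀).lift_unique
        · rw [cassoc]; unfold fpMap
          rw [((fp B₀ B₀).lift_spec _ _).1, ← cassoc,
            ((fp B₀ zeroAlg).lift_spec _ _).1]
          rfl
        · rw [cassoc]; unfold fpMap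
          rw [((fp B₀ B₀).lift_spec _ _).2, ← cassoc,
            ((fp B₀ zeroAlg).lift_spec _ _).2]
          ext x; simp
      calc (UP B₀ B₀ f (0 : B₀.X →ₗ[ℂ] ℂ)) ∘ₗ (LinearMapClass.linearMap Λ)
          = (UP B₀ zeroAlg f 0 ∘ₗ
              (LinearMapClass.linearMap (fpMap fp (NonUnitalAlgHom.id ℂ B₀.X) (0 : AlgC.Hom B₀ zeroAlg))))
              ∘ₗ (LinearMapClass.linearMap Λ) := by rw [h2]
        _ = f ∘ₗ (LinearMapClass.linearMap ((((fp B₀ zeroAlg).lift (NonUnitalAlgHom.id ℂ B₀.X) 0).comp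
              (fpMap fp (NonUnitalAlgHom.id ℂ B₀.X) (0 : AlgC.Hom B₀ zeroAlg))).comp Λ)) := by
            rw [(hunit B₀ f).1]; simp only [tl, LinearMap.comp_assoc]
        _ = f ∘ₗ (LinearMapClass.linearMap (((fp B₀ B₀).lift (NonUnitalAlgHom.id ℂ B₀.X) 0).comp Λ)) := by
            rw [key]
        _ = f := by rw [hcounit.1, idlin, LinearMap.comp_id]
end
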